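/- Let E_κ(z) = exp(z) + κ with Re(κ) ≥ 2, and let z ∈ ℂ with Re(z) ≤ Re(κ) + 1. Then for all k ≥ 1, |Re(E_κ^k(z))| ≤ F^k(Re(κ) + 2) - 1, where F(t) = e^t - 1 and E_κ^k denotes the k-th iterate. -/

import Mathlib

/-- Model function for exponential growth: F(t) = e^t - 1. -/
noncomputable def F (t : ℝ) : ℝ := Real.exp t - 1

/-- The exponential map E_κ(z) = exp(z) + κ. -/
noncomputable def E (κ : ℂ) (z : ℂ) : ℂ := Complex.exp z + κ

lemma F_ge (t : ℝ) : t ≤ F t := by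
  have := Real.add_one_le_exp t
  simp [F]; linarith

lemma F_iter_ge (k : ℕ) (t : ℝ) : t ≤ F^[k] t := by
  induction k with
  | zero => simp
  | succ n ih =>
    rw [Function.iterate_succ_apply']
    exact le_trans ih (F_ge _)

lemma step_lem (c t : ℝ) (hc : 2 ≤ c) (ht : c + 2 ≤ t) :
    Real.exp (t - 1) + c ≤ Real.exp t - 2 := by
  have h1 : Real.exp (t - 1) ≥ t := by
    have := Real.add_one_le_exp (t - 1); linarith
  have h2 : Real.exp t = Real.exp (t - 1) * Real.exp 1 := by
    rw [← Real.exp_add]; ring_nf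
  have he : (2 : ℝ) ≤ Real.exp 1 := by
    have := Real.add_one_le_exp (1 : ℝ); linarith
  nlinarith [Real.exp_pos (t - 1)]

lemma re_E_bound (κ w : ℂ) (hκ : 2 ≤ κ.re) : |(E κ w).re| ≤ Real.exp w.re + κ.re := by
  have h1 : |(Complex.exp w).re| ≤ Real.exp w.re := by
    calc |(Complex.exp w).re| ≤ ‖Complex.exp w‖ := Complex.abs_re_le_norm _
    _ = Real.exp w.re := Complex.norm_exp w
  have : (E κ w).re = (Complex.exp w).re + κ.re := by simp [E]
  rw [this]
  calc |(Complex.exp w).re + κ.re| ≤ |(Complex.exp w).re| + |κ.re| := abs_add_le _ _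
  _ ≤ Real.exp w.re + κ.re := by rw [abs_of_nonneg (show (0:ℝ) ≤ κ.re by linarith)]; linarith

/-- If Re(κ) ≥ 2 and Re(z) ≤ Re(κ) + 1, then for all k ≥ 1,
    |Re(E_κ^k(z))| ≤ F^k(Re(κ) + 2) - 1. -/
theorem re_iterate_bound (κ z : ℂ) (hκ : 2 ≤ κ.re) (hz : z.re ≤ κ.re + 1) :
    ∀ k : ℕ, 1 ≤ k → |((E κ)^[k] z).re| ≤ F^[k] (κ.re + 2) - 1 := by
  intro k hk
  obtain ⟨n, rfl⟩ : ∃ n, k = n + 1 := ⟨k - 1, (Nat.succ_pred_eq_of_pos hk).symm⟩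
  clear hk
  induction n with
  | zero =>
    simp only [zero_add, Function.iterate_one]
    have h1 := re_E_bound κ z hκ
    have h2 : Real.exp z.re ≤ Real.exp (κ.re + 2 - 1) :=
      Real.exp_le_exp.mpr (by linarith)
    have h3 := step_lem κ.re (κ.re + 2) hκ le_rfl
    simp only [F]
    linarith
  | succ n ih =>
    rw [Function.iterate_succ_apply']
    set w := (E κ)^[n + 1] z with hw
    set s := F^[n + 1] (κ.re + 2) with hs
    have hsr : κ.re + 2 ≤ s := F_iter_ge _ _
    have hwre : w.re ≤ s - 1 := le_trans (le_abs_self _) ih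
    have h1 := re_E_bound κ w hκ
    have h2 : Real.exp w.re ≤ Real.exp (s - 1) := Real.exp_le_exp.mpr hwre
    have h3 := step_lem κ.re s hκ hsr
    rw [Function.iterate_succ_apply', ← hs]
    simp only [F]
    linarith
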